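/- Let d be an odd integer with q ≡ -1 (mod d), q ≡ 1 (mod 4), and gcd((q+1)/d, d) = 1. Let c ∈ F_{q^2} satisfy (c/2)^{(q+1)/2} = 1, let k be an odd integer, u = (q+1)/d + 1, u_1 = (d-1)(q+1)/d + 1, and h(x) = c + x^{u_1+k} + x^{qu+2+k}. Then f(x) = x^r h(x^{q-1}) is a permutation polynomial of F_{q^2} if and only if gcd(r-k-1, (q+1)/d) = 1, gcd(r, q-1) = 1, and gcd(s+r-k-1, d) = 1, where s is the integer with 1 ≤ s ≤ d and s ≡ (q+1)/d (mod d). -/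

import Mathlib

private lemma gcd_shift (a b n : ℤ) (h : n ∣ a - b) : Int.gcd a n = Int.gcd b n := by
  have key : ∀ x y : ℤ, n ∣ x - y → (Int.gcd x n : ℤ) ∣ Int.gcd y n := by
    intro x y hxy
    apply Int.dvd_coe_gcd
    · have h1 : (Int.gcd x n : ℤ) ∣ x := Int.gcd_dvd_left _ _
      have h2 : (Int.gcd x n : ℤ) ∣ x - y := (Int.gcd_dvd_right _ _).trans hxy
      simpa using dvd_sub h1 h2
    · exact Int.gcd_dvd_right _ _
  have h2 : n ∣ b - a := by
    have := h.neg_right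
    simpa [neg_sub] using this
  exact Nat.dvd_antisymm (Int.natCast_dvd_natCast.mp (key a b h))
    (Int.natCast_dvd_natCast.mp (key b a h2))

private lemma exists_orderOf_eq' {G : Type*} [Group G] [Fintype G] [IsCyclic G] {t : ℕ}
    (ht : t ∣ Fintype.card G) : ∃ ζ : G, orderOf ζ = t := by
  obtain ⟨g, hg⟩ := IsCyclic.exists_generator (α := G)
  have hord : orderOf g = Fintype.card G := by
    rw [orderOf_eq_card_of_forall_mem_zpowers hg, Nat.card_eq_fintype_card]
  refine ⟨g ^ (Fintype.card G / t), ?_⟩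
  rw [orderOf_pow, hord]
  have hc0 : 0 < Fintype.card G := Fintype.card_pos
  have h1 : (Fintype.card G).gcd (Fintype.card G / t) = Fintype.card G / t :=
    Nat.gcd_eq_right (Nat.div_dvd_of_dvd ht)
  rw [h1]
  exact Nat.div_div_self ht hc0.ne'

private lemma int_gcd_cast (a : ℤ) (m : ℕ) : Int.gcd a (m : ℤ) = a.natAbs.gcd m := by
  simp [Int.gcd]

set_option maxHeartbeats 1600000 in
theorem stmt7 (p pn q : ℕ) (hp : p.Prime) (hpn : 0 < pn) (hq : q = p ^ pn)
    (F : Type*) [Field F] [Fintype F] (hF : Fintype.card F = q ^ 2)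
    (d : ℕ) (hdodd : Odd d) (hd : 0 < d) (hdvd : d ∣ q + 1) (hq4 : q % 4 = 1)
    (hcop : Nat.gcd ((q + 1) / d) d = 1)
    (c : F) (hc : (c / 2) ^ ((q + 1) / 2) = 1)
    (k : ℕ) (hk : Odd k) (r : ℕ)
    (s : ℕ) (hs1 : 1 ≤ s) (hsd : s ≤ d) (hsmod : s % d = ((q + 1) / d) % d) :
    Function.Bijective (fun x : F => x ^ r *
      (c + (x ^ (q - 1)) ^ ((d - 1) * ((q + 1) / d) + 1 + k)
         + (x ^ (q - 1)) ^ (q * ((q + 1) / d + 1) + 2 + k))) ↔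
      (Int.gcd ((r : ℤ) - k - 1) (((q + 1) / d : ℕ) : ℤ) = 1 ∧
        Nat.gcd r (q - 1) = 1 ∧
        Int.gcd ((s : ℤ) + r - k - 1) (d : ℤ) = 1) := by
  classical
  have hq2 : 2 ≤ q := by
    rw [hq]; exact Nat.one_lt_pow hpn.ne' hp.one_lt
  have hq5 : 5 ≤ q := by omega
  -- characteristic
  have hp' : (ringChar F).Prime := CharP.char_is_prime F (ringChar F)
  obtain ⟨n, -, hcard⟩ := FiniteField.card F (ringChar F)
  have hpp : ringChar F = p := by
    have h1 : ringChar F ∣ p ^ (pn * 2) := by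
      rw [pow_mul, ← hq, ← hF, hcard]
      exact dvd_pow_self _ n.pos.ne'
    exact ((Nat.prime_dvd_prime_iff_eq hp' hp).mp (hp'.dvd_of_dvd_pow h1))
  haveI : CharP F p := hpp ▸ ringChar.charP F
  haveI : Fact p.Prime := ⟨hp⟩
  have hfrob : ∀ x y : F, (x + y) ^ q = x ^ q + y ^ q := by
    intro x y; rw [hq]; exact add_pow_char_pow x y p pn
  have h2p : (2 : F) ^ p = 2 := by
    have h := add_pow_char (1 : F) 1 p; norm_num at h; exact h
  have h2q : (2 : F) ^ q = 2 := by
    have key : ∀ j : ℕ, (2 : F) ^ (p ^ j) = 2 := by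
      intro j
      induction j with
      | zero => simp
      | succ i ih => rw [pow_succ, pow_mul, ih, h2p]
    rw [hq]; exact key pn
  have h2 : (2 : F) ≠ 0 := by
    intro h20
    have hpdvd : (p : ℕ) ∣ 2 := (CharP.cast_eq_zero_iff F p 2).mp (by exact_mod_cast h20)
    have hp2 : p = 2 := (Nat.prime_dvd_prime_iff_eq hp Nat.prime_two).mp hpdvd
    subst hp2
    have : 2 ∣ q := hq ▸ dvd_pow_self 2 hpn.ne'
    omega
  have hc0 : c ≠ 0 := by
    intro h
    rw [h, zero_div, zero_pow (by omega)] at hc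
    exact zero_ne_one hc
  have hcq1 : c ^ (q + 1) = 4 := by
    have h1 : (c / 2) ^ (q + 1) = 1 := by
      have hh : q + 1 = 2 * ((q + 1) / 2) := by omega
      rw [hh, pow_mul', hc, one_pow]
    have h2' : c ^ (q + 1) = 2 ^ (q + 1) := by
      rw [div_pow, div_eq_one_iff_eq (pow_ne_zero _ h2)] at h1
      exact h1
    rw [h2', pow_succ, h2q]; norm_num
  have hqq : (q - 1) * (q + 1) = q ^ 2 - 1 := by
    obtain ⟨t, ht⟩ : ∃ t, q = t + 1 := ⟨q - 1, by omega⟩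
    rw [ht, show (t + 1) ^ 2 = (t + 1 - 1) * (t + 1 + 1) + 1 by simp; ring]
    simp
  have hcardU : Fintype.card Fˣ = q ^ 2 - 1 := by
    rw [Fintype.card_units, hF]
  -- notation
  set e := (q + 1) / d with he
  set A := (d - 1) * e + 1 + k with hA
  set B := q * (e + 1) + 2 + k with hB
  set f := fun x : F => x ^ r * (c + (x ^ (q - 1)) ^ A + (x ^ (q - 1)) ^ B) with hf
  clear_value f
  have hed : e * d = q + 1 := Nat.div_mul_cancel hdvd
  clear_value e
  obtain ⟨d', hd'⟩ : ∃ d', d = d' + 1 := ⟨d - 1, by omega⟩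
  have hBA : B = A + e * (q + 1) := by
    simp only [hA, hB, hd', Nat.add_sub_cancel]
    have hed' : e * (d' + 1) = q + 1 := hd' ▸ hed
    zify at hed' ⊢
    linear_combination -hed'
  have hAeven : Even A := by
    obtain ⟨k', hk'⟩ := hk
    refine ⟨(d' * e) / 2 + k' + 1, ?_⟩
    have hev : Even (d' * e) := by
      have hd'e : Even d' := by
        rcases hdodd with ⟨t, ht⟩
        exact ⟨t, by omega⟩
      exact hd'e.mul_right e
    rcases hev with ⟨u, hu⟩
    simp only [hA, hd', Nat.add_sub_cancel]
    omega
  have hApos : 0 < A := by rw [hA]; omega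
  clear_value A B
  -- merging of the two terms, nonvanishing, key identity (on (q+1)-roots of unity)
  have hmerge : ∀ ζ : F, ζ ^ (q + 1) = 1 → c + ζ ^ A + ζ ^ B = c + 2 * ζ ^ A := by
    intro ζ hζ
    rw [hBA, pow_add, mul_comm e (q + 1), pow_mul, hζ, one_pow, mul_one]; ring
  have hnv : ∀ ζ : F, ζ ^ (q + 1) = 1 → c + 2 * ζ ^ A ≠ 0 := by
    intro ζ hζ hcontra
    have hζ0 : ζ ≠ 0 := by
      intro h; rw [h] at hζ; rw [zero_pow (by omega)] at hζ; exact zero_ne_one hζ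
    have hζA : ζ ^ A = -(c / 2) := by
      field_simp
      linear_combination hcontra
    have hodd2 : Odd ((q + 1) / 2) := ⟨(q - 1) / 4, by omega⟩
    rcases hAeven with ⟨a2, ha2⟩
    have h1 : (ζ ^ A) ^ ((q + 1) / 2) = 1 := by
      have hexp : A * ((q + 1) / 2) = a2 * (q + 1) := by
        have h2q1 : 2 * ((q + 1) / 2) = q + 1 := by omega
        calc A * ((q + 1) / 2) = a2 * (2 * ((q + 1) / 2)) := by rw [ha2]; ring
        _ = a2 * (q + 1) := by rw [h2q1]
      rw [← pow_mul, hexp, mul_comm a2 (q + 1), pow_mul, hζ, one_pow]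
    rw [hζA, Odd.neg_pow hodd2, hc] at h1
    exact h2 (by linear_combination -h1)
  have hKI0 : ∀ ζ : F, ζ ^ (q + 1) = 1 →
      c * ζ ^ A * (c + ζ ^ A + ζ ^ B) ^ q = 2 * (c + ζ ^ A + ζ ^ B) := by
    intro ζ hζ
    rw [hmerge ζ hζ]
    have hexp : (c + 2 * ζ ^ A) ^ q = c ^ q + 2 * (ζ ^ q) ^ A := by
      rw [hfrob, mul_pow, h2q, ← pow_mul, ← pow_mul, mul_comm A q]
    rw [hexp]
    have hinv : ζ ^ A * (ζ ^ q) ^ A = 1 := by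
      rw [← mul_pow, ← pow_succ', hζ, one_pow]
    have hc4 : c * c ^ q = 4 := by rw [← pow_succ', hcq1]
    linear_combination ζ ^ A * hc4 + 2 * c * hinv
  -- pass to f-level
  have hyy : ∀ x : F, x ≠ 0 → (x ^ (q - 1)) ^ (q + 1) = 1 := by
    intro x hx
    rw [← pow_mul, hqq, ← hF]
    exact FiniteField.pow_card_sub_one_eq_one x hx
  have hH0 : ∀ x : F, x ≠ 0 → c + (x ^ (q - 1)) ^ A + (x ^ (q - 1)) ^ B ≠ 0 := by
    intro x hx
    rw [hmerge _ (hyy x hx)]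
    exact hnv _ (hyy x hx)
  have hKI : ∀ x : F, x ≠ 0 →
      c * (x ^ (q - 1)) ^ A * (f x) ^ (q - 1) = 2 * (x ^ (q - 1)) ^ r := by
    intro x hx
    apply mul_right_cancel₀ (hH0 x hx)
    have hfx : f x = x ^ r * (c + (x ^ (q - 1)) ^ A + (x ^ (q - 1)) ^ B) := by rw [hf]
    have hq1 : q - 1 + 1 = q := by omega
    have hxr : (x ^ r) ^ (q - 1) = (x ^ (q - 1)) ^ r := by
      rw [← pow_mul, mul_comm, pow_mul]
    have hHq : (c + (x ^ (q - 1)) ^ A + (x ^ (q - 1)) ^ B) ^ (q - 1) *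
        (c + (x ^ (q - 1)) ^ A + (x ^ (q - 1)) ^ B) =
        (c + (x ^ (q - 1)) ^ A + (x ^ (q - 1)) ^ B) ^ q := by
      rw [← pow_succ, hq1]
    calc c * (x ^ (q - 1)) ^ A * (f x) ^ (q - 1) *
          (c + (x ^ (q - 1)) ^ A + (x ^ (q - 1)) ^ B)
        = (x ^ (q - 1)) ^ r * (c * (x ^ (q - 1)) ^ A *
            ((c + (x ^ (q - 1)) ^ A + (x ^ (q - 1)) ^ B) ^ (q - 1) *
             (c + (x ^ (q - 1)) ^ A + (x ^ (q - 1)) ^ B))) := by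
          rw [hfx, mul_pow, hxr]; ring
      _ = (x ^ (q - 1)) ^ r * (c * (x ^ (q - 1)) ^ A *
            (c + (x ^ (q - 1)) ^ A + (x ^ (q - 1)) ^ B) ^ q) := by rw [hHq]
      _ = (x ^ (q - 1)) ^ r * (2 * (c + (x ^ (q - 1)) ^ A + (x ^ (q - 1)) ^ B)) := by
          rw [hKI0 _ (hyy x hx)]
      _ = 2 * (x ^ (q - 1)) ^ r * (c + (x ^ (q - 1)) ^ A + (x ^ (q - 1)) ^ B) := by ring
  -- basic divisibilities
  have hdvdm1 : (q - 1) ∣ q ^ 2 - 1 := ⟨q + 1, hqq.symm⟩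
  have hdvdp1 : (q + 1) ∣ q ^ 2 - 1 := ⟨q - 1, by rw [← hqq]; ring⟩
  -- main field-theoretic equivalence
  have main : Function.Bijective f ↔
      (Nat.gcd r (q - 1) = 1 ∧ Int.gcd ((r : ℤ) - (A : ℤ)) (((q + 1 : ℕ)) : ℤ) = 1) := by
    constructor
    · -- necessity
      intro hbij
      have hinj := hbij.injective
      have hG2 : Nat.gcd r (q - 1) = 1 := by
        by_contra hg
        set t := Nat.gcd r (q - 1) with htdef
        have ht0 : t ≠ 0 := by
          intro h0
          have := Nat.gcd_eq_zero_iff.mp (htdef ▸ h0)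
          omega
        have ht2 : 2 ≤ t := by omega
        obtain ⟨ε, hε⟩ := exists_orderOf_eq' (G := Fˣ) (t := t)
          (by rw [hcardU]; exact (Nat.gcd_dvd_right r (q - 1)).trans hdvdm1)
        have hεq : ε ^ (q - 1) = 1 :=
          orderOf_dvd_iff_pow_eq_one.mp (hε ▸ Nat.gcd_dvd_right r (q - 1))
        have hεr : ε ^ r = 1 :=
          orderOf_dvd_iff_pow_eq_one.mp (hε ▸ Nat.gcd_dvd_left r (q - 1))
        have hfe : f (↑ε) = f 1 := by
          simp only [hf]
          have hv1 : (↑ε : F) ^ (q - 1) = 1 := by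
            rw [← Units.val_pow_eq_pow_val, hεq, Units.val_one]
          have hv2 : (↑ε : F) ^ r = 1 := by
            rw [← Units.val_pow_eq_pow_val, hεr, Units.val_one]
          rw [hv1, hv2, one_pow, one_pow]
          simp
        have hε1 : ε = 1 := Units.val_eq_one.mp (hinj hfe)
        rw [hε1, orderOf_one] at hε
        omega
      refine ⟨hG2, ?_⟩
      by_contra hg
      set t := Int.gcd ((r : ℤ) - (A : ℤ)) (((q + 1 : ℕ)) : ℤ) with htdef
      have htq : t ∣ q + 1 := by
        have h := Int.gcd_dvd_right (a := (r : ℤ) - (A : ℤ)) (b := ((q + 1 : ℕ) : ℤ))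
        rw [← htdef] at h
        exact_mod_cast h
      have ht0 : t ≠ 0 := by
        intro h0
        rw [h0] at htq
        have := Nat.eq_zero_of_zero_dvd htq
        omega
      have ht2 : 2 ≤ t := by omega
      obtain ⟨ζ, hζord⟩ := exists_orderOf_eq' (G := Fˣ) (t := t)
        (by rw [hcardU]; exact htq.trans hdvdp1)
      have hζq : ζ ^ (q + 1) = 1 := orderOf_dvd_iff_pow_eq_one.mp (hζord ▸ htq)
      have hζrA : ζ ^ r = ζ ^ A := by
        have h1 : ((orderOf ζ : ℤ)) ∣ ((r : ℤ) - (A : ℤ)) := by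
          rw [hζord]
          exact Int.gcd_dvd_left _ _
        have h2' : ζ ^ ((r : ℤ) - (A : ℤ)) = 1 := orderOf_dvd_iff_zpow_eq_one.mp h1
        rw [zpow_sub, zpow_natCast, zpow_natCast] at h2'
        exact div_eq_one.mp h2'
      -- find x with x^(q-1) = ζ
      obtain ⟨g, hg⟩ := IsCyclic.exists_generator (α := Fˣ)
      have hordg : orderOf g = q ^ 2 - 1 := by
        rw [orderOf_eq_card_of_forall_mem_zpowers hg, Nat.card_eq_fintype_card, hcardU]
      obtain ⟨j, hj⟩ := Subgroup.mem_zpowers_iff.mp (hg ζ)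
      have hgj : g ^ (j * ((q : ℤ) + 1)) = 1 := by
        rw [zpow_mul, hj, show ((q : ℤ) + 1) = ((q + 1 : ℕ) : ℤ) by push_cast; ring,
          zpow_natCast, hζq]
      have hdvd1 : ((q ^ 2 - 1 : ℕ) : ℤ) ∣ j * ((q : ℤ) + 1) := by
        rw [← hordg]
        exact orderOf_dvd_iff_zpow_eq_one.mpr hgj
      have hfac : ((q ^ 2 - 1 : ℕ) : ℤ) = ((q : ℤ) - 1) * ((q : ℤ) + 1) := by
        push_cast [Nat.cast_sub (Nat.one_le_pow 2 q (by omega))]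
        ring
      have hdvd2 : ((q : ℤ) - 1) ∣ j := by
        have hne : ((q : ℤ) + 1) ≠ 0 := by positivity
        rw [hfac] at hdvd1
        exact (mul_dvd_mul_iff_right hne).mp hdvd1
      obtain ⟨i, hi⟩ := hdvd2
      have hx0 : (g ^ i) ^ (q - 1) = ζ := by
        rw [← hj, hi, ← zpow_natCast (g ^ i) (q - 1), ← zpow_mul]
        congr 1
        push_cast [Nat.cast_sub (show 1 ≤ q by omega)]
        ring
      have hxne : (↑(g ^ i) : F) ≠ 0 := Units.ne_zero _
      have hyζ : (↑(g ^ i) : F) ^ (q - 1) = ↑ζ := by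
        rw [← Units.val_pow_eq_pow_val, hx0]
      have e1 := hKI (↑(g ^ i)) hxne
      rw [hyζ] at e1
      have e2 := hKI 1 one_ne_zero
      rw [one_pow, one_pow, one_pow, mul_one, mul_one] at e2
      have hζrAF : (↑ζ : F) ^ r = (↑ζ : F) ^ A := by
        rw [← Units.val_pow_eq_pow_val, ← Units.val_pow_eq_pow_val, hζrA]
      have hζF0 : (↑ζ : F) ≠ 0 := Units.ne_zero ζ
      have hA0 : (↑ζ : F) ^ A ≠ 0 := pow_ne_zero _ hζF0
      have hWW : (c * (↑ζ : F) ^ A) * (f (↑(g ^ i))) ^ (q - 1)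
          = (c * (↑ζ : F) ^ A) * (f 1) ^ (q - 1) := by
        linear_combination e1 - (↑ζ : F) ^ A * e2 + 2 * hζrAF
      have hW := mul_left_cancel₀ (mul_ne_zero hc0 hA0) hWW
      have hfx0 : f (↑(g ^ i)) ≠ 0 := by
        simp only [hf]
        exact mul_ne_zero (pow_ne_zero _ hxne) (hH0 _ hxne)
      have hf10 : f 1 ≠ 0 := by
        simp only [hf]
        exact mul_ne_zero (pow_ne_zero _ one_ne_zero) (hH0 1 one_ne_zero)
      set w : Fˣ := Units.mk0 (f (↑(g ^ i))) hfx0 * (Units.mk0 (f 1) hf10)⁻¹ with hwdef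
      have hwval : (↑w : F) = f (↑(g ^ i)) * (f 1)⁻¹ := by
        simp [hwdef]
      have hwq : w ^ (q - 1) = 1 := by
        apply Units.val_eq_one.mp
        rw [Units.val_pow_eq_pow_val, hwval, mul_pow, hW, inv_pow,
          mul_inv_cancel₀ (pow_ne_zero _ hf10)]
      have hcij : IsCoprime (r : ℤ) (((q - 1 : ℕ)) : ℤ) := by
        rw [Int.isCoprime_iff_gcd_eq_one]
        simpa using hG2
      obtain ⟨a, b, hab⟩ := hcij
      set ε : Fˣ := w ^ (-a) with hεdef
      have hεq : ε ^ (q - 1) = 1 := by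
        rw [hεdef, ← zpow_natCast (w ^ (-a)) (q - 1), ← zpow_mul, mul_comm, zpow_mul,
          zpow_natCast, hwq, one_zpow]
      have hεr : ε ^ r = w⁻¹ := by
        rw [hεdef, ← zpow_natCast (w ^ (-a)) r, ← zpow_mul]
        have hexp : -a * (r : ℤ) = ((q - 1 : ℕ) : ℤ) * b + (-1) := by linarith [hab]
        rw [hexp, zpow_add, zpow_mul, zpow_natCast, hwq, one_zpow, one_mul, zpow_neg_one]
      have hεxq : ((↑ε : F) * ↑(g ^ i)) ^ (q - 1) = ↑ζ := by
        rw [mul_pow, ← Units.val_pow_eq_pow_val, hεq, Units.val_one, one_mul, hyζ]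
      have hεxr : ((↑ε : F) * ↑(g ^ i)) ^ r = ↑(w⁻¹) * (↑(g ^ i) : F) ^ r := by
        rw [mul_pow, ← Units.val_pow_eq_pow_val, hεr]
      have h3 : f ((↑ε : F) * ↑(g ^ i)) = ↑(w⁻¹) * f (↑(g ^ i)) := by
        simp only [hf]
        rw [hεxq, hεxr, hyζ]
        ring
      have hwinv : ((w⁻¹ : Fˣ) : F) = f 1 * (f (↑(g ^ i)))⁻¹ := by
        rw [hwdef, mul_inv_rev, inv_inv, Units.val_mul]
        simp
      have h4 : (↑(w⁻¹) : F) * f (↑(g ^ i)) = f 1 := by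
        rw [hwinv]
        exact inv_mul_cancel_right₀ hfx0 (f 1)
      have h5 := hinj (h3.trans h4)
      have h6 : (↑ζ : F) = 1 := by
        rw [← hεxq, h5, one_pow]
      have hζ1 : ζ = 1 := Units.val_eq_one.mp h6
      rw [hζ1, orderOf_one] at hζord
      omega
    · -- sufficiency
      rintro ⟨hG2, hGC⟩
      have hr0 : r ≠ 0 := by
        rintro rfl
        rw [Nat.gcd_zero_left] at hG2
        omega
      rw [← Finite.injective_iff_bijective]
      intro x1 x2 hx12
      by_cases h1 : x1 = 0
      · by_cases h2' : x2 = 0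
        · rw [h1, h2']
        · exfalso
          have hfx1 : f x1 = 0 := by
            simp only [hf, h1]
            rw [zero_pow hr0, zero_mul]
          have hfx2 : f x2 ≠ 0 := by
            simp only [hf]
            exact mul_ne_zero (pow_ne_zero _ h2') (hH0 x2 h2')
          exact hfx2 (hx12 ▸ hfx1)
      · by_cases h2' : x2 = 0
        · exfalso
          have hfx2 : f x2 = 0 := by
            simp only [hf, h2']
            rw [zero_pow hr0, zero_mul]
          have hfx1 : f x1 ≠ 0 := by
            simp only [hf]
            exact mul_ne_zero (pow_ne_zero _ h1) (hH0 x1 h1)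
          exact hfx1 (hfx2 ▸ hx12)
        · -- both nonzero
          have e1 := hKI x1 h1
          have e2 := hKI x2 h2'
          rw [hx12] at e1
          have key : (x1 ^ (q - 1)) ^ r * (x2 ^ (q - 1)) ^ A
              = (x2 ^ (q - 1)) ^ r * (x1 ^ (q - 1)) ^ A := by
            apply mul_left_cancel₀ h2
            linear_combination (x1 ^ (q - 1)) ^ A * e2 - (x2 ^ (q - 1)) ^ A * e1
          set u1 : Fˣ := Units.mk0 x1 h1 with hu1
          set u2 : Fˣ := Units.mk0 x2 h2' with hu2
          set ζ : Fˣ := u1 ^ (q - 1) * (u2 ^ (q - 1))⁻¹ with hζdef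
          have hζq : ζ ^ (q + 1) = 1 := by
            apply Units.val_eq_one.mp
            simp only [hζdef, Units.val_pow_eq_pow_val, Units.val_mul,
              Units.val_inv_eq_inv_val, Units.val_mk0, mul_pow, inv_pow, hu1, hu2]
            rw [hyy x1 h1, hyy x2 h2']
            simp
          have hζrA : ζ ^ r = ζ ^ A := by
            apply Units.ext
            simp only [hζdef, Units.val_pow_eq_pow_val, Units.val_mul,
              Units.val_inv_eq_inv_val, Units.val_mk0, mul_pow, inv_pow, hu1, hu2]
            have hb : (x2 ^ (q - 1)) ^ r ≠ 0 := pow_ne_zero _ (pow_ne_zero _ h2')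
            have hdd : (x2 ^ (q - 1)) ^ A ≠ 0 := pow_ne_zero _ (pow_ne_zero _ h2')
            field_simp
            linear_combination key
          have hζ1 : ζ = 1 := by
            have ho1 : orderOf ζ ∣ q + 1 := orderOf_dvd_iff_pow_eq_one.mpr hζq
            have hz : ζ ^ ((r : ℤ) - (A : ℤ)) = 1 := by
              rw [zpow_sub, zpow_natCast, zpow_natCast, hζrA]
              exact div_self' _
            have ho2' : ((orderOf ζ : ℤ)) ∣ ((r : ℤ) - (A : ℤ)) :=
              orderOf_dvd_iff_zpow_eq_one.mpr hz
            have ho2 : orderOf ζ ∣ ((r : ℤ) - (A : ℤ)).natAbs := by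
              have := Int.natAbs_dvd_natAbs.mpr ho2'
              simpa using this
            have hdg : orderOf ζ ∣ Int.gcd ((r : ℤ) - (A : ℤ)) (((q + 1 : ℕ)) : ℤ) := by
              rw [int_gcd_cast]
              exact Nat.dvd_gcd ho2 ho1
            rw [hGC, Nat.dvd_one] at hdg
            exact orderOf_eq_one_iff.mp hdg
          have hyeq : x1 ^ (q - 1) = x2 ^ (q - 1) := by
            have := mul_inv_eq_one.mp hζ1
            have hval := congrArg (Units.val) this
            simpa [hu1, hu2, Units.val_pow_eq_pow_val] using hval
          have hxr : x1 ^ r = x2 ^ r := by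
            have hfe : x1 ^ r * (c + (x2 ^ (q - 1)) ^ A + (x2 ^ (q - 1)) ^ B)
                = x2 ^ r * (c + (x2 ^ (q - 1)) ^ A + (x2 ^ (q - 1)) ^ B) := by
              have h1' : f x1 = x1 ^ r * (c + (x2 ^ (q - 1)) ^ A + (x2 ^ (q - 1)) ^ B) := by
                simp only [hf]
                rw [hyeq]
              have h2'' : f x2 = x2 ^ r * (c + (x2 ^ (q - 1)) ^ A + (x2 ^ (q - 1)) ^ B) := by
                simp only [hf]
              rw [← h1', ← h2'', hx12]
            exact mul_right_cancel₀ (hH0 x2 h2') hfe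
          -- now conclude x1 = x2
          have hτr : (u1 * u2⁻¹) ^ r = 1 := by
            apply Units.val_eq_one.mp
            simp only [Units.val_pow_eq_pow_val, Units.val_mul, Units.val_inv_eq_inv_val,
              Units.val_mk0, mul_pow, inv_pow, hu1, hu2]
            rw [hxr]
            exact mul_inv_cancel₀ (pow_ne_zero _ h2')
          have hτq : (u1 * u2⁻¹) ^ (q - 1) = 1 := by
            apply Units.val_eq_one.mp
            simp only [Units.val_pow_eq_pow_val, Units.val_mul, Units.val_inv_eq_inv_val,
              Units.val_mk0, mul_pow, inv_pow, hu1, hu2]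
            rw [hyeq]
            exact mul_inv_cancel₀ (pow_ne_zero _ h2')
          have hτ1 : u1 * u2⁻¹ = 1 := by
            have hoo : orderOf (u1 * u2⁻¹) ∣ Nat.gcd r (q - 1) :=
              Nat.dvd_gcd (orderOf_dvd_iff_pow_eq_one.mpr hτr)
                (orderOf_dvd_iff_pow_eq_one.mpr hτq)
            rw [hG2, Nat.dvd_one] at hoo
            exact orderOf_eq_one_iff.mp hoo
          have := mul_inv_eq_one.mp hτ1
          have hval := congrArg (Units.val) this
          simpa [hu1, hu2] using hval
  -- arithmetic equivalence
  have hdz : (d : ℤ) = (d' : ℤ) + 1 := by exact_mod_cast hd'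
  have hAZ : (A : ℤ) = (d' : ℤ) * e + 1 + k := by
    rw [hA, hd', Nat.add_sub_cancel]
    push_cast
    ring
  have hceq : (Int.gcd ((r : ℤ) - (A : ℤ)) (((q + 1 : ℕ)) : ℤ) = 1) ↔
      (Int.gcd ((r : ℤ) - k - 1) ((e : ℕ) : ℤ) = 1 ∧
        Int.gcd ((s : ℤ) + r - k - 1) (d : ℤ) = 1) := by
    have hqed : (((q + 1 : ℕ)) : ℤ) = ((e * d : ℕ) : ℤ) := by exact_mod_cast hed.symm
    rw [hqed]
    have hsplit : Int.gcd ((r : ℤ) - (A : ℤ)) ((e * d : ℕ) : ℤ) = 1 ↔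
        (Int.gcd ((r : ℤ) - (A : ℤ)) ((e : ℕ) : ℤ) = 1 ∧
          Int.gcd ((r : ℤ) - (A : ℤ)) ((d : ℕ) : ℤ) = 1) := by
      rw [int_gcd_cast, int_gcd_cast, int_gcd_cast]
      exact Nat.coprime_mul_iff_right
    rw [hsplit]
    have hg1 : Int.gcd ((r : ℤ) - (A : ℤ)) ((e : ℕ) : ℤ)
        = Int.gcd ((r : ℤ) - k - 1) ((e : ℕ) : ℤ) := by
      apply gcd_shift
      exact ⟨-(d' : ℤ), by rw [hAZ]; ring⟩
    have hse : (d : ℤ) ∣ (s : ℤ) - (e : ℤ) := by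
      have hmod : (s : ℤ) % d = (e : ℤ) % d := by
        have := congrArg (Nat.cast : ℕ → ℤ) hsmod
        push_cast at this
        exact this
      exact Int.ModEq.dvd (Int.ModEq.symm hmod)
    obtain ⟨u, hu⟩ := hse
    have hg2 : Int.gcd ((r : ℤ) - (A : ℤ)) ((d : ℕ) : ℤ)
        = Int.gcd ((s : ℤ) + r - k - 1) ((d : ℕ) : ℤ) := by
      apply gcd_shift
      refine ⟨-(e : ℤ) - u, ?_⟩
      rw [hAZ]
      linear_combination (e : ℤ) * hdz - hu
    rw [hg1, hg2]
  rw [main, hceq]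
  tauto
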